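/- Let r, k, c, m > 0 and let x₁ = 2km/(−c + √(c² + 4crk)), y₁ = (−c + √(c² + 4crk))/(2ck). Then the Jacobian matrix of the vector field (rx/(1+ky) − cxy, cxy² − my) at (x₁, y₁) equals [[0, −rkx₁/(1+ky₁)² − cx₁], [cy₁², m]]; its trace is m > 0 and its determinant D = cy₁²(rkx₁/(1+ky₁)² + cx₁) is strictly positive, and consequently every complex root λ of the characteristic polynomial λ² − mλ + D has strictly positive real part. -/

import Mathlib

theorem stmt2_aux (m D : ℝ) (hm : 0 < m) (hD : 0 < D) (lam : ℂ)
    (h : lam ^ 2 - (m : ℂ) * lam + (D : ℂ) = 0) : 0 < lam.re := by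
  rw [Complex.ext_iff] at h
  obtain ⟨hre, him⟩ := h
  simp only [pow_two, Complex.add_re, Complex.sub_re, Complex.mul_re, Complex.mul_im,
    Complex.add_im, Complex.sub_im, Complex.ofReal_re, Complex.ofReal_im,
    Complex.zero_re, Complex.zero_im] at hre him
  have him' : lam.im * (2 * lam.re - m) = 0 := by linarith
  rcases mul_eq_zero.mp him' with hb | hb
  · by_contra hcon
    push_neg at hcon
    rw [hb] at hre
    nlinarith [sq_nonneg lam.re]
  · linarith

open ContinuousLinearMap in
theorem stmt2 (r k c m : ℝ) (hr : 0 < r) (hk : 0 < k) (hc : 0 < c) (hm : 0 < m)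
    (x₁ y₁ : ℝ)
    (hx₁ : x₁ = 2 * k * m / (-c + Real.sqrt (c ^ 2 + 4 * c * r * k)))
    (hy₁ : y₁ = (-c + Real.sqrt (c ^ 2 + 4 * c * r * k)) / (2 * c * k)) :
    (∀ v : ℝ × ℝ,
        fderiv ℝ (fun p : ℝ × ℝ =>
          (r * p.1 / (1 + k * p.2) - c * p.1 * p.2,
            c * p.1 * p.2 ^ 2 - m * p.2)) (x₁, y₁) v
          = (0 * v.1 + (-(r * k * x₁ / (1 + k * y₁) ^ 2) - c * x₁) * v.2,
              c * y₁ ^ 2 * v.1 + m * v.2)) ∧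
      0 < m ∧
      0 < c * y₁ ^ 2 * (r * k * x₁ / (1 + k * y₁) ^ 2 + c * x₁) ∧
      ∀ lam : ℂ,
        lam ^ 2 - (m : ℂ) * lam
            + (c * y₁ ^ 2 * (r * k * x₁ / (1 + k * y₁) ^ 2 + c * x₁) : ℝ) = 0 →
          0 < lam.re := by
  -- basic facts about the square root
  set s := Real.sqrt (c ^ 2 + 4 * c * r * k) with hs
  have hs2 : s ^ 2 = c ^ 2 + 4 * c * r * k := Real.sq_sqrt (by positivity)
  have hsnn : 0 ≤ s := Real.sqrt_nonneg _
  have hcs : c < s := by nlinarith [mul_pos (mul_pos (mul_pos hc hr) hk) (by norm_num : (0:ℝ) < 4)]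
  have h0 : 0 < -c + s := by linarith
  have hy : 0 < y₁ := by rw [hy₁]; exact div_pos h0 (by positivity)
  have hx : 0 < x₁ := by rw [hx₁]; exact div_pos (by positivity) h0
  have hdenp : (0:ℝ) < 1 + k * y₁ := by positivity
  have hden : (1:ℝ) + k * y₁ ≠ 0 := ne_of_gt hdenp
  -- key identities at the equilibrium
  have hA : r = c * y₁ * (1 + k * y₁) := by
    rw [hy₁]
    field_simp
    nlinarith [hs2]
  have hB : c * x₁ * y₁ = m := by
    rw [hx₁, hy₁]
    field_simp
  have h11 : r / (1 + k * y₁) - c * y₁ = 0 := by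
    rw [hA]; field_simp; ring
  have hDpos : 0 < c * y₁ ^ 2 * (r * k * x₁ / (1 + k * y₁) ^ 2 + c * x₁) := by
    apply mul_pos (by positivity)
    exact add_pos (div_pos (by positivity) (by positivity)) (mul_pos hc hx)
  refine ⟨?_, hm, hDpos, ?_⟩
  · -- the Jacobian computation
    intro v
    have hF : (fun p : ℝ × ℝ =>
            (r * p.1 / (1 + k * p.2) - c * p.1 * p.2,
              c * p.1 * p.2 ^ 2 - m * p.2))
        = fun p : ℝ × ℝ =>
            ((r * p.1) * (1 + k * p.2)⁻¹ - c * p.1 * p.2,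
              c * p.1 * (p.2 * p.2) - m * p.2) := by
      funext p; rw [div_eq_mul_inv, pow_two]
    rw [hF]
    have hg : HasFDerivAt (fun p : ℝ × ℝ => 1 + k * p.2)
        (k • ContinuousLinearMap.snd ℝ ℝ ℝ) ((x₁, y₁) : ℝ × ℝ) :=
      ((hasFDerivAt_snd (p := ((x₁, y₁) : ℝ × ℝ))).const_mul k).const_add 1
    have hinv := (hasFDerivAt_inv (x := (1 : ℝ) + k * y₁) hden).comp ((x₁, y₁) : ℝ × ℝ) hg
    have h1 : HasFDerivAt (fun p : ℝ × ℝ => (r * p.1) * (1 + k * p.2)⁻¹ - c * p.1 * p.2)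
        (((r * x₁) • ((smulRight (1 : ℝ →L[ℝ] ℝ) (-(((1:ℝ) + k * y₁) ^ 2)⁻¹)).comp
            (k • ContinuousLinearMap.snd ℝ ℝ ℝ))
          + ((1 + k * y₁)⁻¹) • (r • ContinuousLinearMap.fst ℝ ℝ ℝ))
         - ((c * x₁) • ContinuousLinearMap.snd ℝ ℝ ℝ
            + y₁ • (c • ContinuousLinearMap.fst ℝ ℝ ℝ))) ((x₁, y₁) : ℝ × ℝ) :=
      (((hasFDerivAt_fst (p := ((x₁, y₁) : ℝ × ℝ))).const_mul r).mul hinv).sub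
        (((hasFDerivAt_fst (𝕜 := ℝ) (p := ((x₁, y₁) : ℝ × ℝ))).const_mul c).mul
          (hasFDerivAt_snd (𝕜 := ℝ) (p := ((x₁, y₁) : ℝ × ℝ))))
    have h2 : HasFDerivAt (fun p : ℝ × ℝ => c * p.1 * (p.2 * p.2) - m * p.2)
        (((c * x₁) • (y₁ • ContinuousLinearMap.snd ℝ ℝ ℝ + y₁ • ContinuousLinearMap.snd ℝ ℝ ℝ)
            + (y₁ * y₁) • (c • ContinuousLinearMap.fst ℝ ℝ ℝ))
          - m • ContinuousLinearMap.snd ℝ ℝ ℝ) ((x₁, y₁) : ℝ × ℝ) :=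
      (((hasFDerivAt_fst (𝕜 := ℝ) (p := ((x₁, y₁) : ℝ × ℝ))).const_mul c).mul
          ((hasFDerivAt_snd (𝕜 := ℝ) (p := ((x₁, y₁) : ℝ × ℝ))).mul
            (hasFDerivAt_snd (𝕜 := ℝ) (p := ((x₁, y₁) : ℝ × ℝ))))).sub
        ((hasFDerivAt_snd (𝕜 := ℝ) (p := ((x₁, y₁) : ℝ × ℝ))).const_mul m)
    rw [(HasFDerivAt.prodMk h1 h2).fderiv]
    simp only [ContinuousLinearMap.prod_apply, ContinuousLinearMap.sub_apply,
      ContinuousLinearMap.add_apply, ContinuousLinearMap.smul_apply,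
      ContinuousLinearMap.comp_apply, ContinuousLinearMap.smulRight_apply,
      ContinuousLinearMap.coe_fst', ContinuousLinearMap.coe_snd',
      ContinuousLinearMap.one_apply, smul_eq_mul]
    rw [Prod.ext_iff]
    constructor
    · show r * x₁ * (k * v.2 * -((1 + k * y₁) ^ 2)⁻¹) + (1 + k * y₁)⁻¹ * (r * v.1)
          - (c * x₁ * v.2 + y₁ * (c * v.1))
        = 0 * v.1 + (-(r * k * x₁ / (1 + k * y₁) ^ 2) - c * x₁) * v.2
      rw [hA]
      field_simp
      ring
    · show c * x₁ * (y₁ * v.2 + y₁ * v.2) + y₁ * y₁ * (c * v.1) - m * v.2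
        = c * y₁ ^ 2 * v.1 + m * v.2
      linear_combination 2 * v.2 * hB
  · -- eigenvalues have positive real part
    intro lam hlam
    exact stmt2_aux m _ hm hDpos lam hlam
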